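/- With infinite observational data and uniform sampling: in the stratified sampling model with allocation (x_1, x_2, x_3, x_4) = (1/4, 1/4, 1/4, 1/4), suppose 0 < ε ≤ 1, 0 < δ < 1, m/4 is a positive integer, and p_3+p_7 > 0, p_4+p_8 > 0, p_1+p_5 > 0, p_2+p_6 > 0. If m ≥ (18 ln(8/δ)/ε²) · max( 4(a_2²+a_4²)/min((p_3+p_7)², (p_4+p_8)²), 4(a_1²+a_3²)/min((p_1+p_5)², (p_2+p_6)²) ), then P(|ATE-hat − ATE(p_1,...,p_8)| ≥ ε) < δ. -/

import Mathlib

open MeasureTheory ProbabilityTheory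

/-- The average treatment effect as a function of the joint distribution
`p : Fin 8 → ℝ`, where `p i` here is `p_{i+1}` in the paper. -/
noncomputable def ATE (p : Fin 8 → ℝ) : ℝ :=
  p 6 * (p 0 + p 2 + p 4 + p 6) / (p 6 + p 2)
    + p 7 * (1 - p 0 - p 2 - p 4 - p 6) / (p 7 + p 3)
    - p 4 * (p 0 + p 2 + p 4 + p 6) / (p 4 + p 0)
    - p 5 * (1 - p 0 - p 2 - p 4 - p 6) / (p 5 + p 1)

/-- The joint distribution `p` of `(Y,T,Z)` obtained from the observational
distribution `a` of `(Y,T)` and the conditional probabilities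
`q j = P(Z=0 | (Y,T) = j-th outcome)`. -/
noncomputable def pOf (a q : Fin 4 → ℝ) : Fin 8 → ℝ :=
  ![a 0 * q 0, a 0 * (1 - q 0), a 1 * q 1, a 1 * (1 - q 1),
    a 2 * q 2, a 2 * (1 - q 2), a 3 * q 3, a 3 * (1 - q 3)]

/-! ### Auxiliary lemmas -/

section Aux

lemma bern_D_pos (p : ℝ) (hp0 : 0 ≤ p) (hp1 : p ≤ 1) (y : ℝ) :
    0 < 1 - p + p * Real.exp y := by
  rcases eq_or_lt_of_le hp1 with h | h
  · subst h; simpa using Real.exp_pos y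
  · have h1 : 0 < 1 - p := by linarith
    have := Real.exp_pos y
    nlinarith

/-- Hoeffding's lemma for a centered Bernoulli random variable. -/
lemma bernoulli_mgf_le (p x : ℝ) (hp0 : 0 ≤ p) (hp1 : p ≤ 1) :
    p * Real.exp (x * (1 - p)) + (1 - p) * Real.exp (x * (0 - p)) ≤ Real.exp (x ^ 2 / 8) := by
  set D : ℝ → ℝ := fun y => 1 - p + p * Real.exp y with hDdef
  have hD : ∀ y, 0 < D y := bern_D_pos p hp0 hp1
  set G : ℝ → ℝ := fun y => y / 4 + p - p * Real.exp y / D y with hGdef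
  set g : ℝ → ℝ := fun y => y ^ 2 / 8 + p * y - Real.log (D y) with hgdef
  have hDderiv : ∀ y, HasDerivAt D (p * Real.exp y) y := by
    intro y
    exact ((Real.hasDerivAt_exp y).const_mul p).const_add (1 - p)
  have hgderiv : ∀ y, HasDerivAt g (G y) y := by
    intro y
    have hlog : HasDerivAt (fun y => Real.log (D y)) (p * Real.exp y / D y) y :=
      (hDderiv y).log (hD y).ne'
    have hpoly : HasDerivAt (fun y : ℝ => y ^ 2 / 8 + p * y) (y / 4 + p) y := by
      have h1 : HasDerivAt (fun y : ℝ => y ^ 2) (2 * y) y := by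
        simpa using hasDerivAt_pow 2 y
      have := (h1.div_const 8).add ((hasDerivAt_id y).const_mul p)
      exact this.congr_deriv (by ring)
    exact hpoly.sub hlog
  have hGderiv : ∀ y, HasDerivAt G (1 / 4 - p * Real.exp y * (1 - p) / (D y) ^ 2) y := by
    intro y
    have hnum : HasDerivAt (fun y => p * Real.exp y) (p * Real.exp y) y :=
      (Real.hasDerivAt_exp y).const_mul p
    have hdiv : HasDerivAt (fun y => p * Real.exp y / D y)
        ((p * Real.exp y * D y - p * Real.exp y * (p * Real.exp y)) / (D y) ^ 2) y :=
      hnum.div (hDderiv y) (hD y).ne'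
    have hlin : HasDerivAt (fun y : ℝ => y / 4 + p) (1 / 4) y := by
      simpa using ((hasDerivAt_id y).div_const 4).add_const p
    have := hlin.sub hdiv
    refine this.congr_deriv ?_
    have := (hD y).ne'
    simp only [hDdef]
    ring
  have hGmono : Monotone G := by
    refine monotone_of_deriv_nonneg (fun y => (hGderiv y).differentiableAt) (fun y => ?_)
    rw [(hGderiv y).deriv, show D y = 1 - p + p * Real.exp y from rfl]
    have h1 : 0 < 1 - p + p * Real.exp y := hD y
    have h3 : p * Real.exp y * (1 - p) / (1 - p + p * Real.exp y) ^ 2 ≤ 1 / 4 := by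
      rw [div_le_iff₀ (by positivity)]
      nlinarith [sq_nonneg (1 - p - p * Real.exp y)]
    linarith
  have hD0 : D 0 = 1 := by
    have : D 0 = 1 - p + p * Real.exp 0 := rfl
    rw [this, Real.exp_zero]; ring
  have hG0 : G 0 = 0 := by
    have : G 0 = 0 / 4 + p - p * Real.exp 0 / D 0 := rfl
    rw [this, hD0, Real.exp_zero]; ring
  have hg0 : g 0 = 0 := by
    have : g 0 = 0 ^ 2 / 8 + p * 0 - Real.log (D 0) := rfl
    rw [this, hD0]; simp
  have hgnonneg : ∀ y, 0 ≤ g y := by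
    intro y
    rcases le_total 0 y with hy | hy
    · have hmono : MonotoneOn g (Set.Ici 0) := by
        refine monotoneOn_of_deriv_nonneg (convex_Ici 0)
          (fun z _ => ((hgderiv z).differentiableAt).continuousAt.continuousWithinAt)
          (fun z _ => ((hgderiv z).differentiableAt).differentiableWithinAt)
          (fun z hz => ?_)
        rw [(hgderiv z).deriv]
        rw [interior_Ici] at hz
        have : G 0 ≤ G z := hGmono (le_of_lt hz)
        linarith [hG0 ▸ this]
      have := hmono (Set.self_mem_Ici) (Set.mem_Ici.mpr hy) hy
      linarith [hg0 ▸ this]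
    · have hanti : AntitoneOn g (Set.Iic 0) := by
        refine antitoneOn_of_deriv_nonpos (convex_Iic 0)
          (fun z _ => ((hgderiv z).differentiableAt).continuousAt.continuousWithinAt)
          (fun z _ => ((hgderiv z).differentiableAt).differentiableWithinAt)
          (fun z hz => ?_)
        rw [(hgderiv z).deriv]
        rw [interior_Iic] at hz
        have : G z ≤ G 0 := hGmono (le_of_lt hz)
        linarith [hG0 ▸ this]
      have := hanti (Set.mem_Iic.mpr hy) (Set.self_mem_Iic) hy
      linarith [hg0 ▸ this]
  have key : Real.log (D x) - x * p ≤ x ^ 2 / 8 := by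
    have := hgnonneg x
    simp only [hgdef] at this
    linarith
  have hLHS : p * Real.exp (x * (1 - p)) + (1 - p) * Real.exp (x * (0 - p))
      = Real.exp (Real.log (D x) - x * p) := by
    rw [Real.exp_sub, Real.exp_log (hD x)]
    rw [show x * (1 - p) = x - x * p by ring, show x * (0 - p) = -(x * p) by ring,
      Real.exp_sub, Real.exp_neg]
    have hDx : D x = 1 - p + p * Real.exp x := rfl
    rw [hDx]
    field_simp
    ring
  rw [hLHS]
  exact Real.exp_le_exp.mpr key

lemma iIndepFun_precomp {ι κ Ω β : Type*} [MeasurableSpace Ω] [mβ : MeasurableSpace β]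
    {μ : Measure Ω} {f : ι → Ω → β}
    (h : iIndepFun f μ) {g : κ → ι} (hg : Function.Injective g) :
    iIndepFun (fun k => f (g k)) μ := by
  rw [iIndepFun_iff_measure_inter_preimage_eq_mul] at h ⊢
  intro S sets hsets
  have key := h (S.map ⟨g, hg⟩)
    (sets := Function.extend g sets fun _ => Set.univ) ?_
  · have h1 : (⋂ i ∈ S.map ⟨g, hg⟩, f i ⁻¹' Function.extend g sets (fun _ => Set.univ) i)
        = ⋂ k ∈ S, f (g k) ⁻¹' sets k := by
      ext ω
      simp only [Set.mem_iInter, Finset.mem_map, Function.Embedding.coeFn_mk]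
      constructor
      · intro hI k hk
        have := hI (g k) ⟨k, hk, rfl⟩
        rwa [hg.extend_apply] at this
      · rintro hI i ⟨k, hk, rfl⟩
        rw [hg.extend_apply]
        exact hI k hk
    have h2 : ∏ i ∈ S.map ⟨g, hg⟩, μ (f i ⁻¹' Function.extend g sets (fun _ => Set.univ) i)
        = ∏ k ∈ S, μ (f (g k) ⁻¹' sets k) := by
      rw [Finset.prod_map]
      exact Finset.prod_congr rfl fun k _ => by
        simp [Function.Embedding.coeFn_mk, hg.extend_apply]
    rw [← h1, ← h2]
    exact key
  · intro i hi
    rcases Finset.mem_map.mp hi with ⟨k, hk, rfl⟩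
    simp only [Function.Embedding.coeFn_mk]
    rw [hg.extend_apply]
    exact hsets k hk

lemma bern_exp_integral {Ω : Type*} [MeasurableSpace Ω] (μ : Measure Ω) [IsProbabilityMeasure μ]
    {A : Set Ω} (hA : MeasurableSet A) (p : ℝ) (hp0 : 0 ≤ p) (hp1 : p ≤ 1)
    (hμA : μ A = ENNReal.ofReal p) (Y : Ω → ℝ)
    (hY1 : ∀ ω ∈ A, Y ω = 1) (hY0 : ∀ ω ∉ A, Y ω = 0) (s : ℝ) :
    Integrable (fun ω => Real.exp (s * (Y ω - p))) μ ∧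
    ∫ ω, Real.exp (s * (Y ω - p)) ∂μ ≤ Real.exp (s ^ 2 / 8) := by
  have hfeq : (fun ω => Real.exp (s * (Y ω - p)))
      = fun ω => Real.exp (s * (0 - p))
          + A.indicator (fun _ => Real.exp (s * (1 - p)) - Real.exp (s * (0 - p))) ω := by
    funext ω
    by_cases h : ω ∈ A
    · rw [hY1 ω h, Set.indicator_of_mem h]; ring
    · rw [hY0 ω h, Set.indicator_of_notMem h]; ring
  have hint : Integrable (fun ω => Real.exp (s * (Y ω - p))) μ := by
    rw [hfeq]
    exact (integrable_const _).add ((integrable_const _).indicator hA)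
  refine ⟨hint, ?_⟩
  have htoReal : (μ A).toReal = p := by rw [hμA, ENNReal.toReal_ofReal hp0]
  have hI : ∫ ω, Real.exp (s * (Y ω - p)) ∂μ
      = Real.exp (s * (0 - p)) + p * (Real.exp (s * (1 - p)) - Real.exp (s * (0 - p))) := by
    rw [hfeq, integral_add (integrable_const _) ((integrable_const _).indicator hA),
      integral_const, integral_indicator_const _ hA, measureReal_def, measureReal_def, htoReal, measure_univ]
    simp [smul_eq_mul]
  rw [hI]
  have := bernoulli_mgf_le p s hp0 hp1
  linarith

lemma hoeffding_one_sided {Ω : Type*} [MeasurableSpace Ω] (μ : Measure Ω) [IsProbabilityMeasure μ]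
    {N : ℕ} (V : Fin N → Ω → Bool) (hmeas : ∀ i, Measurable (V i))
    (hind : iIndepFun V μ)
    (p : ℝ) (hp0 : 0 ≤ p) (hp1 : p ≤ 1)
    (hd : ∀ i, μ {ω | V i ω = true} = ENNReal.ofReal p)
    (t : ℝ) (ht : 0 ≤ t) :
    (μ {ω | (N : ℝ) * t ≤ ∑ i, ((if V i ω then (1:ℝ) else 0) - p)}).toReal
      ≤ Real.exp (-2 * N * t ^ 2) := by
  set Z : Fin N → Ω → ℝ := fun i ω => (if V i ω then (1:ℝ) else 0) - p with hZ
  have hZmeas : ∀ i, Measurable (Z i) := fun i =>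
    (Measurable.of_discrete (f := fun b : Bool => (if b then (1:ℝ) else 0) - p)).comp (hmeas i)
  have hZindep : iIndepFun Z μ :=
    hind.comp (fun _ b => (if b then (1:ℝ) else 0) - p) (fun _ => .of_discrete)
  have hA : ∀ i, MeasurableSet {ω | V i ω = true} := fun i =>
    (hmeas i) (measurableSet_singleton true)
  have hsingle : ∀ (s : ℝ) (i : Fin N),
      Integrable (fun ω => Real.exp (s * Z i ω)) μ ∧
      ∫ ω, Real.exp (s * Z i ω) ∂μ ≤ Real.exp (s ^ 2 / 8) := by
    intro s i
    exact bern_exp_integral μ (hA i) p hp0 hp1 (hd i)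
      (fun ω => if V i ω then (1:ℝ) else 0)
      (fun ω h => by simp only [Set.mem_setOf_eq] at h; simp [h])
      (fun ω h => by simp only [Set.mem_setOf_eq] at h; simp [h]) s
  have hint : ∀ (s : ℝ) (i : Fin N), Integrable (fun ω => Real.exp (s * Z i ω)) μ :=
    fun s i => (hsingle s i).1
  have hmgfB : ∀ i, mgf (Z i) μ (4 * t) ≤ Real.exp (2 * t ^ 2) := by
    intro i
    have h := (hsingle (4 * t) i).2
    have : ((4 * t) ^ 2 / 8 : ℝ) = 2 * t ^ 2 := by ring
    rw [this] at h
    exact h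
  have hsum_int : Integrable (fun ω => Real.exp (4 * t * (∑ i, Z i) ω)) μ :=
    iIndepFun.integrable_exp_mul_sum hZindep hZmeas (fun i _ => hint (4 * t) i)
  have hchern := measure_ge_le_exp_mul_mgf (μ := μ) (X := ∑ i, Z i) (t := 4 * t)
    ((N : ℝ) * t) (by positivity) hsum_int
  have hmgfsum : mgf (∑ i, Z i) μ (4 * t) = ∏ i, mgf (Z i) μ (4 * t) :=
    hZindep.mgf_sum hZmeas Finset.univ
  have hprod : ∏ i : Fin N, mgf (Z i) μ (4 * t) ≤ Real.exp (2 * N * t ^ 2) := by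
    calc ∏ i : Fin N, mgf (Z i) μ (4 * t) ≤ ∏ _i : Fin N, Real.exp (2 * t ^ 2) :=
          Finset.prod_le_prod (fun i _ => mgf_nonneg) (fun i _ => hmgfB i)
      _ = Real.exp (2 * t ^ 2) ^ N := by simp [Finset.prod_const, Finset.card_univ]
      _ = Real.exp (2 * N * t ^ 2) := by
          rw [← Real.exp_nat_mul]; ring_nf
  have hset : {ω | (N : ℝ) * t ≤ ∑ i, ((if V i ω then (1:ℝ) else 0) - p)}
      = {ω | (N : ℝ) * t ≤ (∑ i, Z i) ω} := by
    ext ω; simp [hZ, Finset.sum_apply]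
  rw [hset]
  calc (μ {ω | (N : ℝ) * t ≤ (∑ i, Z i) ω}).toReal
      ≤ Real.exp (-(4 * t) * ((N : ℝ) * t)) * mgf (∑ i, Z i) μ (4 * t) := hchern
    _ ≤ Real.exp (-(4 * t) * ((N : ℝ) * t)) * Real.exp (2 * N * t ^ 2) := by
        apply mul_le_mul_of_nonneg_left _ (Real.exp_pos _).le
        rw [hmgfsum]; exact hprod
    _ = Real.exp (-2 * N * t ^ 2) := by
        rw [← Real.exp_add]; ring_nf

lemma hoeffding_two_sided {Ω : Type*} [MeasurableSpace Ω] (μ : Measure Ω) [IsProbabilityMeasure μ]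
    {N : ℕ} (hN : 0 < N) (V : Fin N → Ω → Bool) (hmeas : ∀ i, Measurable (V i))
    (hind : iIndepFun V μ)
    (p : ℝ) (hp0 : 0 ≤ p) (hp1 : p ≤ 1)
    (hd : ∀ i, μ {ω | V i ω = true} = ENNReal.ofReal p)
    (t : ℝ) (ht : 0 ≤ t) :
    (μ {ω | t ≤ |((Finset.univ.filter fun i => V i ω = true).card : ℝ) / N - p|}).toReal
      ≤ 2 * Real.exp (-2 * N * t ^ 2) := by
  have hNR : (0:ℝ) < N := by exact_mod_cast hN
  set E1 : Set Ω := {ω | (N : ℝ) * t ≤ ∑ i, ((if V i ω then (1:ℝ) else 0) - p)} with hE1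
  set E2 : Set Ω := {ω | (N : ℝ) * t ≤ ∑ i, ((if (!V i ω) then (1:ℝ) else 0) - (1 - p))} with hE2
  have hcard : ∀ ω, (∑ i, (if V i ω then (1:ℝ) else 0))
      = ((Finset.univ.filter fun i => V i ω = true).card : ℝ) := by
    intro ω; rw [Finset.sum_boole]
  have hsum1 : ∀ ω, (∑ i, ((if V i ω then (1:ℝ) else 0) - p))
      = ((Finset.univ.filter fun i => V i ω = true).card : ℝ) - N * p := by
    intro ω
    rw [Finset.sum_sub_distrib, hcard ω, Finset.sum_const, Finset.card_univ]
    simp [nsmul_eq_mul]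
  have hsum2 : ∀ ω, (∑ i, ((if (!V i ω) then (1:ℝ) else 0) - (1 - p)))
      = N * p - ((Finset.univ.filter fun i => V i ω = true).card : ℝ) := by
    intro ω
    have hpoint : ∀ i : Fin N, ((if (!V i ω) then (1:ℝ) else 0) - (1 - p))
        = -(((if V i ω then (1:ℝ) else 0) - p)) := by
      intro i; cases h : V i ω <;> simp [h]
    rw [Finset.sum_congr rfl (fun i _ => hpoint i), Finset.sum_neg_distrib, hsum1 ω]
    ring
  have hsub : {ω | t ≤ |((Finset.univ.filter fun i => V i ω = true).card : ℝ) / N - p|}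
      ⊆ E1 ∪ E2 := by
    intro ω hω
    simp only [Set.mem_setOf_eq] at hω
    set c : ℝ := ((Finset.univ.filter fun i => V i ω = true).card : ℝ) with hc
    rcases le_abs.mp hω with h | h
    · left
      show (N : ℝ) * t ≤ _
      rw [hsum1 ω]
      have : (N:ℝ) * t ≤ N * (c / N - p) := by
        apply mul_le_mul_of_nonneg_left h hNR.le
      calc (N:ℝ) * t ≤ N * (c / N - p) := this
        _ = c - N * p := by field_simp
    · right
      show (N : ℝ) * t ≤ _
      rw [hsum2 ω]
      have : (N:ℝ) * t ≤ N * (-(c / N - p)) := by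
        apply mul_le_mul_of_nonneg_left h hNR.le
      calc (N:ℝ) * t ≤ N * (-(c / N - p)) := this
        _ = N * p - c := by field_simp; ring
  have hb1 : (μ E1).toReal ≤ Real.exp (-2 * N * t ^ 2) :=
    hoeffding_one_sided μ V hmeas hind p hp0 hp1 hd t ht
  have hb2 : (μ E2).toReal ≤ Real.exp (-2 * N * t ^ 2) := by
    have hmeas' : ∀ i, Measurable (fun ω => !V i ω) := fun i =>
      (Measurable.of_discrete (f := Bool.not)).comp (hmeas i)
    have hind' : iIndepFun (fun i ω => !V i ω) μ :=
      hind.comp (fun _ b => !b) (fun _ => .of_discrete)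
    have hd' : ∀ i, μ {ω | (!V i ω) = true} = ENNReal.ofReal (1 - p) := by
      intro i
      have hAc : {ω | (!V i ω) = true} = {ω | V i ω = true}ᶜ := by
        ext ω; simp [Bool.not_eq_true']
      have hAm : MeasurableSet {ω | V i ω = true} := (hmeas i) (measurableSet_singleton true)
      rw [hAc, measure_compl hAm (measure_ne_top μ _),
        measure_univ, hd i, ← ENNReal.ofReal_one, ← ENNReal.ofReal_sub _ hp0]
    exact hoeffding_one_sided μ (fun i ω => !V i ω) hmeas' hind' (1 - p)
      (by linarith) (by linarith) hd' t ht
  have hle : μ {ω | t ≤ |((Finset.univ.filter fun i => V i ω = true).card : ℝ) / N - p|}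
      ≤ μ E1 + μ E2 := le_trans (measure_mono hsub) (measure_union_le E1 E2)
  have hfin1 : μ E1 ≠ ⊤ := measure_ne_top μ _
  have hfin2 : μ E2 ≠ ⊤ := measure_ne_top μ _
  calc (μ {ω | t ≤ |((Finset.univ.filter fun i => V i ω = true).card : ℝ) / N - p|}).toReal
      ≤ (μ E1 + μ E2).toReal := ENNReal.toReal_mono (by finiteness) hle
    _ = (μ E1).toReal + (μ E2).toReal := ENNReal.toReal_add hfin1 hfin2
    _ ≤ 2 * Real.exp (-2 * N * t ^ 2) := by linarith

lemma ATE_pOf (a q : Fin 4 → ℝ) :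
    ATE (pOf a q)
      = (a 3 * q 3) / (a 1 * q 1 + a 3 * q 3)
          * (a 0 * q 0 + a 1 * q 1 + a 2 * q 2 + a 3 * q 3)
        + (a 3 * (1 - q 3)) / (a 1 * (1 - q 1) + a 3 * (1 - q 3))
          * (1 - (a 0 * q 0 + a 1 * q 1 + a 2 * q 2 + a 3 * q 3))
        - (a 2 * q 2) / (a 0 * q 0 + a 2 * q 2)
          * (a 0 * q 0 + a 1 * q 1 + a 2 * q 2 + a 3 * q 3)
        - (a 2 * (1 - q 2)) / (a 0 * (1 - q 0) + a 2 * (1 - q 2))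
          * (1 - (a 0 * q 0 + a 1 * q 1 + a 2 * q 2 + a 3 * q 3)) := by
  have e0 : pOf a q 0 = a 0 * q 0 := rfl
  have e1 : pOf a q 1 = a 0 * (1 - q 0) := rfl
  have e2 : pOf a q 2 = a 1 * q 1 := rfl
  have e3 : pOf a q 3 = a 1 * (1 - q 1) := rfl
  have e4 : pOf a q 4 = a 2 * q 2 := rfl
  have e5 : pOf a q 5 = a 2 * (1 - q 2) := rfl
  have e6 : pOf a q 6 = a 3 * q 3 := rfl
  have e7 : pOf a q 7 = a 3 * (1 - q 3) := rfl
  simp only [ATE, e0, e1, e2, e3, e4, e5, e6, e7]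
  ring

lemma ratio_dev {c d c' d' M : ℝ} (hc : 0 ≤ c) (hd : 0 ≤ d) (hc' : 0 ≤ c') (hd' : 0 ≤ d')
    (hb : 0 < c + d) (h1 : |c' - c| ≤ M) (h2 : |d' - d| ≤ M) (hM : 5 * M ≤ c + d) :
    0 < c' + d' ∧ |d' / (c' + d') - d / (c + d)| ≤ (5 / 3) * M / (c + d) := by
  have hM0 : 0 ≤ M := le_trans (abs_nonneg _) h1
  obtain ⟨h1a, h1b⟩ := abs_le.mp h1
  obtain ⟨h2a, h2b⟩ := abs_le.mp h2
  have hb' : (3 / 5) * (c + d) ≤ c' + d' := by linarith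
  have hb'pos : 0 < c' + d' := by linarith
  refine ⟨hb'pos, ?_⟩
  have key : d' / (c' + d') - d / (c + d)
      = ((d' - d) * c - (c' - c) * d) / ((c' + d') * (c + d)) := by
    field_simp
    ring
  rw [key, abs_div, abs_of_pos (mul_pos hb'pos hb)]
  have hnum : |(d' - d) * c - (c' - c) * d| ≤ M * (c + d) := by
    have t1 : |(d' - d) * c| ≤ M * c := by
      rw [abs_mul, abs_of_nonneg hc]
      exact mul_le_mul_of_nonneg_right h2 hc
    have t2 : |(c' - c) * d| ≤ M * d := by
      rw [abs_mul, abs_of_nonneg hd]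
      exact mul_le_mul_of_nonneg_right h1 hd
    calc |(d' - d) * c - (c' - c) * d| ≤ |(d' - d) * c| + |(c' - c) * d| := abs_sub _ _
      _ ≤ M * (c + d) := by linarith
  rw [div_le_div_iff₀ (mul_pos hb'pos hb) hb]
  have e1 : |(d' - d) * c - (c' - c) * d| * (c + d) ≤ M * (c + d) * (c + d) :=
    mul_le_mul_of_nonneg_right hnum hb.le
  have e2 : (5 / 3) * M * ((3 / 5) * (c + d) * (c + d)) ≤ (5 / 3) * M * ((c' + d') * (c + d)) := by
    apply mul_le_mul_of_nonneg_left _ (by positivity)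
    exact mul_le_mul_of_nonneg_right hb' hb.le
  nlinarith [e1, e2]

lemma abs_six {x1 x2 x3 x4 x5 x6 : ℝ} :
    |x1 + x2 + x3 + x4 + x5 + x6| ≤ |x1| + |x2| + |x3| + |x4| + |x5| + |x6| := by
  have h1 := abs_add_le (x1 + x2 + x3 + x4 + x5) x6
  have h2 := abs_add_le (x1 + x2 + x3 + x4) x5
  have h3 := abs_add_le (x1 + x2 + x3) x4
  have h4 := abs_add_le (x1 + x2) x3
  have h5 := abs_add_le x1 x2
  linarith

set_option maxHeartbeats 1000000 in
lemma det_core {a0 a1 a2 a3 q0 q1 q2 q3 q0' q1' q2' q3' ε' M1 M2 : ℝ}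
    (ha0 : 0 ≤ a0) (ha1 : 0 ≤ a1) (ha2 : 0 ≤ a2) (ha3 : 0 ≤ a3)
    (hsum : a0 + a1 + a2 + a3 = 1)
    (hq00 : 0 ≤ q0) (hq01 : q0 ≤ 1) (hq10 : 0 ≤ q1) (hq11 : q1 ≤ 1)
    (hq20 : 0 ≤ q2) (hq21 : q2 ≤ 1) (hq30 : 0 ≤ q3) (hq31 : q3 ≤ 1)
    (hq00' : 0 ≤ q0') (hq01' : q0' ≤ 1) (hq10' : 0 ≤ q1') (hq11' : q1' ≤ 1)
    (hq20' : 0 ≤ q2') (hq21' : q2' ≤ 1) (hq30' : 0 ≤ q3') (hq31' : q3' ≤ 1)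
    (hb1 : 0 < a0 * q0 + a2 * q2) (hb2 : 0 < a0 * (1 - q0) + a2 * (1 - q2))
    (hb3 : 0 < a1 * q1 + a3 * q3) (hb4 : 0 < a1 * (1 - q1) + a3 * (1 - q3))
    (hε'0 : 0 < ε') (hε'1 : ε' ≤ 6 / 5)
    (hM1a : a1 * |q1' - q1| ≤ M1) (hM1b : a3 * |q3' - q3| ≤ M1)
    (hM13 : 6 * M1 ≤ ε' * (a1 * q1 + a3 * q3))
    (hM14 : 6 * M1 ≤ ε' * (a1 * (1 - q1) + a3 * (1 - q3)))
    (hM2a : a0 * |q0' - q0| ≤ M2) (hM2b : a2 * |q2' - q2| ≤ M2)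
    (hM21 : 6 * M2 ≤ ε' * (a0 * q0 + a2 * q2))
    (hM22 : 6 * M2 ≤ ε' * (a0 * (1 - q0) + a2 * (1 - q2))) :
    |((a3 * q3') / (a1 * q1' + a3 * q3')
          * (a0 * q0' + a1 * q1' + a2 * q2' + a3 * q3')
        + (a3 * (1 - q3')) / (a1 * (1 - q1') + a3 * (1 - q3'))
          * (1 - (a0 * q0' + a1 * q1' + a2 * q2' + a3 * q3'))
        - (a2 * q2') / (a0 * q0' + a2 * q2')
          * (a0 * q0' + a1 * q1' + a2 * q2' + a3 * q3')
        - (a2 * (1 - q2')) / (a0 * (1 - q0') + a2 * (1 - q2'))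
          * (1 - (a0 * q0' + a1 * q1' + a2 * q2' + a3 * q3')))
      - ((a3 * q3) / (a1 * q1 + a3 * q3)
          * (a0 * q0 + a1 * q1 + a2 * q2 + a3 * q3)
        + (a3 * (1 - q3)) / (a1 * (1 - q1) + a3 * (1 - q3))
          * (1 - (a0 * q0 + a1 * q1 + a2 * q2 + a3 * q3))
        - (a2 * q2) / (a0 * q0 + a2 * q2)
          * (a0 * q0 + a1 * q1 + a2 * q2 + a3 * q3)
        - (a2 * (1 - q2)) / (a0 * (1 - q0) + a2 * (1 - q2))
          * (1 - (a0 * q0 + a1 * q1 + a2 * q2 + a3 * q3)))|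
      ≤ (8 / 9) * ε' := by
  have hM10 : 0 ≤ M1 := le_trans (mul_nonneg ha1 (abs_nonneg _)) hM1a
  have hM20 : 0 ≤ M2 := le_trans (mul_nonneg ha0 (abs_nonneg _)) hM2a
  have habs1 : |a1 * q1' - a1 * q1| ≤ M1 := by rw [← mul_sub, abs_mul, abs_of_nonneg ha1]; exact hM1a
  have habs3 : |a3 * q3' - a3 * q3| ≤ M1 := by rw [← mul_sub, abs_mul, abs_of_nonneg ha3]; exact hM1b
  have habs1' : |a1 * (1 - q1') - a1 * (1 - q1)| ≤ M1 := by
    rw [← mul_sub, abs_mul, abs_of_nonneg ha1, show (1 - q1') - (1 - q1) = -(q1' - q1) by ring,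
      abs_neg]
    exact hM1a
  have habs3' : |a3 * (1 - q3') - a3 * (1 - q3)| ≤ M1 := by
    rw [← mul_sub, abs_mul, abs_of_nonneg ha3, show (1 - q3') - (1 - q3) = -(q3' - q3) by ring,
      abs_neg]
    exact hM1b
  have habs0 : |a0 * q0' - a0 * q0| ≤ M2 := by rw [← mul_sub, abs_mul, abs_of_nonneg ha0]; exact hM2a
  have habs2 : |a2 * q2' - a2 * q2| ≤ M2 := by rw [← mul_sub, abs_mul, abs_of_nonneg ha2]; exact hM2b
  have habs0' : |a0 * (1 - q0') - a0 * (1 - q0)| ≤ M2 := by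
    rw [← mul_sub, abs_mul, abs_of_nonneg ha0, show (1 - q0') - (1 - q0) = -(q0' - q0) by ring,
      abs_neg]
    exact hM2a
  have habs2' : |a2 * (1 - q2') - a2 * (1 - q2)| ≤ M2 := by
    rw [← mul_sub, abs_mul, abs_of_nonneg ha2, show (1 - q2') - (1 - q2) = -(q2' - q2) by ring,
      abs_neg]
    exact hM2b
  have h5M13 : 5 * M1 ≤ a1 * q1 + a3 * q3 := by
    have := mul_le_mul_of_nonneg_right hε'1 hb3.le
    linarith
  have h5M14 : 5 * M1 ≤ a1 * (1 - q1) + a3 * (1 - q3) := by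
    have := mul_le_mul_of_nonneg_right hε'1 hb4.le
    linarith
  have h5M21 : 5 * M2 ≤ a0 * q0 + a2 * q2 := by
    have := mul_le_mul_of_nonneg_right hε'1 hb1.le
    linarith
  have h5M22 : 5 * M2 ≤ a0 * (1 - q0) + a2 * (1 - q2) := by
    have := mul_le_mul_of_nonneg_right hε'1 hb2.le
    linarith
  obtain ⟨hp1, hr1⟩ := ratio_dev (mul_nonneg ha1 hq10) (mul_nonneg ha3 hq30)
    (mul_nonneg ha1 hq10') (mul_nonneg ha3 hq30') hb3 habs1 habs3 h5M13
  obtain ⟨hp2, hr2⟩ := ratio_dev (mul_nonneg ha1 (by linarith)) (mul_nonneg ha3 (by linarith))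
    (mul_nonneg ha1 (by linarith)) (mul_nonneg ha3 (by linarith)) hb4 habs1' habs3' h5M14
  obtain ⟨hp3, hr3⟩ := ratio_dev (mul_nonneg ha0 hq00) (mul_nonneg ha2 hq20)
    (mul_nonneg ha0 hq00') (mul_nonneg ha2 hq20') hb1 habs0 habs2 h5M21
  obtain ⟨hp4, hr4⟩ := ratio_dev (mul_nonneg ha0 (by linarith)) (mul_nonneg ha2 (by linarith))
    (mul_nonneg ha0 (by linarith)) (mul_nonneg ha2 (by linarith)) hb2 habs0' habs2' h5M22
  have hd1 : |(a3 * q3') / (a1 * q1' + a3 * q3') - (a3 * q3) / (a1 * q1 + a3 * q3)|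
      ≤ 5 * ε' / 18 := by
    refine le_trans hr1 ?_
    rw [div_le_div_iff₀ hb3 (by norm_num)]
    linarith
  have hd2 : |(a3 * (1 - q3')) / (a1 * (1 - q1') + a3 * (1 - q3'))
        - (a3 * (1 - q3)) / (a1 * (1 - q1) + a3 * (1 - q3))| ≤ 5 * ε' / 18 := by
    refine le_trans hr2 ?_
    rw [div_le_div_iff₀ hb4 (by norm_num)]
    linarith
  have hd3 : |(a2 * q2') / (a0 * q0' + a2 * q2') - (a2 * q2) / (a0 * q0 + a2 * q2)|
      ≤ 5 * ε' / 18 := by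
    refine le_trans hr3 ?_
    rw [div_le_div_iff₀ hb1 (by norm_num)]
    linarith
  have hd4 : |(a2 * (1 - q2')) / (a0 * (1 - q0') + a2 * (1 - q2'))
        - (a2 * (1 - q2)) / (a0 * (1 - q0) + a2 * (1 - q2))| ≤ 5 * ε' / 18 := by
    refine le_trans hr4 ?_
    rw [div_le_div_iff₀ hb2 (by norm_num)]
    linarith
  have hS0 : 0 ≤ a0 * q0 + a1 * q1 + a2 * q2 + a3 * q3 := by positivity
  have hS1 : a0 * q0 + a1 * q1 + a2 * q2 + a3 * q3 ≤ 1 := by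
    have u0 : a0 * q0 ≤ a0 := mul_le_of_le_one_right ha0 hq01
    have u1 : a1 * q1 ≤ a1 := mul_le_of_le_one_right ha1 hq11
    have u2 : a2 * q2 ≤ a2 := mul_le_of_le_one_right ha2 hq21
    have u3 : a3 * q3 ≤ a3 := mul_le_of_le_one_right ha3 hq31
    linarith
  have hdS : |(a0 * q0' + a1 * q1' + a2 * q2' + a3 * q3')
      - (a0 * q0 + a1 * q1 + a2 * q2 + a3 * q3)| ≤ ε' / 6 := by
    have hre : (a0 * q0' + a1 * q1' + a2 * q2' + a3 * q3')
        - (a0 * q0 + a1 * q1 + a2 * q2 + a3 * q3)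
        = (a0 * q0' - a0 * q0) + (a1 * q1' - a1 * q1) + (a2 * q2' - a2 * q2)
          + (a3 * q3' - a3 * q3) := by ring
    rw [hre]
    have t1 := abs_add_le (a0 * q0' - a0 * q0 + (a1 * q1' - a1 * q1) + (a2 * q2' - a2 * q2))
      (a3 * q3' - a3 * q3)
    have t2 := abs_add_le (a0 * q0' - a0 * q0 + (a1 * q1' - a1 * q1)) (a2 * q2' - a2 * q2)
    have t3 := abs_add_le (a0 * q0' - a0 * q0) (a1 * q1' - a1 * q1)
    have u1 : ε' * (a1 * q1 + a3 * q3) + ε' * (a1 * (1 - q1) + a3 * (1 - q3))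
        = ε' * a1 + ε' * a3 := by ring
    have u2 : ε' * (a0 * q0 + a2 * q2) + ε' * (a0 * (1 - q0) + a2 * (1 - q2))
        = ε' * a0 + ε' * a2 := by ring
    have u3 : ε' * a0 + ε' * a1 + ε' * a2 + ε' * a3 = ε' := by
      calc ε' * a0 + ε' * a1 + ε' * a2 + ε' * a3 = ε' * (a0 + a1 + a2 + a3) := by ring
        _ = ε' := by rw [hsum, mul_one]
    linarith [t1, t2, t3, habs0, habs1, habs2, habs3, hM13, hM14, hM21, hM22]
  have hr1'0 : 0 ≤ (a3 * q3') / (a1 * q1' + a3 * q3') :=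
    div_nonneg (mul_nonneg ha3 hq30') hp1.le
  have hr1'1 : (a3 * q3') / (a1 * q1' + a3 * q3') ≤ 1 := by
    rw [div_le_one hp1]
    linarith [mul_nonneg ha1 hq10']
  have hr2'0 : 0 ≤ (a3 * (1 - q3')) / (a1 * (1 - q1') + a3 * (1 - q3')) :=
    div_nonneg (mul_nonneg ha3 (by linarith)) hp2.le
  have hr2'1 : (a3 * (1 - q3')) / (a1 * (1 - q1') + a3 * (1 - q3')) ≤ 1 := by
    rw [div_le_one hp2]
    linarith [mul_nonneg ha1 (show (0:ℝ) ≤ 1 - q1' by linarith)]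
  have hr3'0 : 0 ≤ (a2 * q2') / (a0 * q0' + a2 * q2') :=
    div_nonneg (mul_nonneg ha2 hq20') hp3.le
  have hr3'1 : (a2 * q2') / (a0 * q0' + a2 * q2') ≤ 1 := by
    rw [div_le_one hp3]
    linarith [mul_nonneg ha0 hq00']
  have hr4'0 : 0 ≤ (a2 * (1 - q2')) / (a0 * (1 - q0') + a2 * (1 - q2')) :=
    div_nonneg (mul_nonneg ha2 (by linarith)) hp4.le
  have hr4'1 : (a2 * (1 - q2')) / (a0 * (1 - q0') + a2 * (1 - q2')) ≤ 1 := by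
    rw [div_le_one hp4]
    linarith [mul_nonneg ha0 (show (0:ℝ) ≤ 1 - q0' by linarith)]
  have h13 : |(a3 * q3') / (a1 * q1' + a3 * q3') - (a2 * q2') / (a0 * q0' + a2 * q2')| ≤ 1 :=
    abs_le.mpr ⟨by linarith, by linarith⟩
  have h24 : |(a3 * (1 - q3')) / (a1 * (1 - q1') + a3 * (1 - q3'))
      - (a2 * (1 - q2')) / (a0 * (1 - q0') + a2 * (1 - q2'))| ≤ 1 :=
    abs_le.mpr ⟨by linarith, by linarith⟩
  set r1 := (a3 * q3) / (a1 * q1 + a3 * q3) with hr1d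
  set r2 := (a3 * (1 - q3)) / (a1 * (1 - q1) + a3 * (1 - q3)) with hr2d
  set r3 := (a2 * q2) / (a0 * q0 + a2 * q2) with hr3d
  set r4 := (a2 * (1 - q2)) / (a0 * (1 - q0) + a2 * (1 - q2)) with hr4d
  set r1' := (a3 * q3') / (a1 * q1' + a3 * q3') with hr1d'
  set r2' := (a3 * (1 - q3')) / (a1 * (1 - q1') + a3 * (1 - q3')) with hr2d'
  set r3' := (a2 * q2') / (a0 * q0' + a2 * q2') with hr3d'
  set r4' := (a2 * (1 - q2')) / (a0 * (1 - q0') + a2 * (1 - q2')) with hr4d'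
  set S := a0 * q0 + a1 * q1 + a2 * q2 + a3 * q3 with hSd
  set S' := a0 * q0' + a1 * q1' + a2 * q2' + a3 * q3' with hSd'
  have hid : (r1' * S' + r2' * (1 - S') - r3' * S' - r4' * (1 - S'))
      - (r1 * S + r2 * (1 - S) - r3 * S - r4 * (1 - S))
      = S * (r1' - r1) + (1 - S) * (r2' - r2) + (-(S * (r3' - r3)))
        + (-((1 - S) * (r4' - r4))) + (S' - S) * (r1' - r3') + (-((S' - S) * (r2' - r4'))) := by
    ring
  rw [hid]
  have tri := abs_six (x1 := S * (r1' - r1)) (x2 := (1 - S) * (r2' - r2))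
    (x3 := -(S * (r3' - r3))) (x4 := -((1 - S) * (r4' - r4)))
    (x5 := (S' - S) * (r1' - r3')) (x6 := -((S' - S) * (r2' - r4')))
  refine le_trans tri ?_
  rw [abs_neg, abs_neg, abs_neg]
  have b1 : |S * (r1' - r1)| ≤ S * (5 * ε' / 18) := by
    rw [abs_mul, abs_of_nonneg hS0]
    exact mul_le_mul_of_nonneg_left hd1 hS0
  have b2 : |(1 - S) * (r2' - r2)| ≤ (1 - S) * (5 * ε' / 18) := by
    rw [abs_mul, abs_of_nonneg (by linarith : (0:ℝ) ≤ 1 - S)]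
    exact mul_le_mul_of_nonneg_left hd2 (by linarith)
  have b3 : |S * (r3' - r3)| ≤ S * (5 * ε' / 18) := by
    rw [abs_mul, abs_of_nonneg hS0]
    exact mul_le_mul_of_nonneg_left hd3 hS0
  have b4 : |(1 - S) * (r4' - r4)| ≤ (1 - S) * (5 * ε' / 18) := by
    rw [abs_mul, abs_of_nonneg (by linarith : (0:ℝ) ≤ 1 - S)]
    exact mul_le_mul_of_nonneg_left hd4 (by linarith)
  have b5 : |(S' - S) * (r1' - r3')| ≤ ε' / 6 := by
    rw [abs_mul]
    calc |S' - S| * |r1' - r3'| ≤ (ε' / 6) * 1 :=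
          mul_le_mul hdS h13 (abs_nonneg _) (by positivity)
      _ = ε' / 6 := by ring
  have b6 : |(S' - S) * (r2' - r4')| ≤ ε' / 6 := by
    rw [abs_mul]
    calc |S' - S| * |r2' - r4'| ≤ (ε' / 6) * 1 :=
          mul_le_mul hdS h24 (abs_nonneg _) (by positivity)
      _ = ε' / 6 := by ring
  linarith [b1, b2, b3, b4, b5, b6]

lemma det_pOf (a q q' : Fin 4 → ℝ) (ε' M1 M2 : ℝ)
    (ha : ∀ j, 0 ≤ a j) (hasum : ∑ j, a j = 1)
    (hq0 : ∀ j, 0 ≤ q j) (hq1 : ∀ j, q j ≤ 1)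
    (hq0' : ∀ j, 0 ≤ q' j) (hq1' : ∀ j, q' j ≤ 1)
    (hb1 : 0 < a 0 * q 0 + a 2 * q 2) (hb2 : 0 < a 0 * (1 - q 0) + a 2 * (1 - q 2))
    (hb3 : 0 < a 1 * q 1 + a 3 * q 3) (hb4 : 0 < a 1 * (1 - q 1) + a 3 * (1 - q 3))
    (hε'0 : 0 < ε') (hε'1 : ε' ≤ 6 / 5)
    (hM1a : a 1 * |q' 1 - q 1| ≤ M1) (hM1b : a 3 * |q' 3 - q 3| ≤ M1)
    (hM13 : 6 * M1 ≤ ε' * (a 1 * q 1 + a 3 * q 3))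
    (hM14 : 6 * M1 ≤ ε' * (a 1 * (1 - q 1) + a 3 * (1 - q 3)))
    (hM2a : a 0 * |q' 0 - q 0| ≤ M2) (hM2b : a 2 * |q' 2 - q 2| ≤ M2)
    (hM21 : 6 * M2 ≤ ε' * (a 0 * q 0 + a 2 * q 2))
    (hM22 : 6 * M2 ≤ ε' * (a 0 * (1 - q 0) + a 2 * (1 - q 2))) :
    |ATE (pOf a q') - ATE (pOf a q)| ≤ (8 / 9) * ε' := by
  have hsum4 : a 0 + a 1 + a 2 + a 3 = 1 := by
    have := hasum; rwa [Fin.sum_univ_four] at this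
  rw [ATE_pOf, ATE_pOf]
  exact det_core (ha 0) (ha 1) (ha 2) (ha 3) hsum4 (hq0 0) (hq1 0) (hq0 1) (hq1 1)
    (hq0 2) (hq1 2) (hq0 3) (hq1 3) (hq0' 0) (hq1' 0) (hq0' 1) (hq1' 1)
    (hq0' 2) (hq1' 2) (hq0' 3) (hq1' 3) hb1 hb2 hb3 hb4 hε'0 hε'1
    hM1a hM1b hM13 hM14 hM2a hM2b hM21 hM22

lemma sqrtC_ge {A b3 b4 C : ℝ} (hA : 0 ≤ A) (hb3 : 0 < b3) (hb4 : 0 < b4)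
    (hle : 4 * A / min (b3 ^ 2) (b4 ^ 2) ≤ C) :
    2 * Real.sqrt A ≤ Real.sqrt C * min b3 b4 := by
  have hmin : 0 < min b3 b4 := lt_min hb3 hb4
  have hminsq : min (b3 ^ 2) (b4 ^ 2) = (min b3 b4) ^ 2 := by
    rcases le_total b3 b4 with h | h
    · rw [min_eq_left h, min_eq_left (by nlinarith : b3 ^ 2 ≤ b4 ^ 2)]
    · rw [min_eq_right h, min_eq_right (by nlinarith : b4 ^ 2 ≤ b3 ^ 2)]
  have h2 : (2 * Real.sqrt A / min b3 b4) ^ 2 ≤ C := by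
    rw [div_pow, mul_pow, Real.sq_sqrt hA]
    calc (2:ℝ) ^ 2 * A / (min b3 b4) ^ 2 = 4 * A / min (b3 ^ 2) (b4 ^ 2) := by
          rw [hminsq]; norm_num
      _ ≤ C := hle
  have h3 : 2 * Real.sqrt A / min b3 b4 ≤ Real.sqrt C := by
    have := Real.sqrt_le_sqrt h2
    rwa [Real.sqrt_sq (by positivity)] at this
  calc 2 * Real.sqrt A = (2 * Real.sqrt A / min b3 b4) * min b3 b4 := by field_simp
    _ ≤ Real.sqrt C * min b3 b4 := mul_le_mul_of_nonneg_right h3 hmin.le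

lemma six_bound {A C b e : ℝ} (hC : 0 < Real.sqrt C) (hb : 0 < b) (he : 0 ≤ e)
    (hge : 2 * Real.sqrt A ≤ Real.sqrt C * b) :
    6 * (Real.sqrt A * (e / (3 * Real.sqrt C))) ≤ e * b := by
  have h1 : 6 * (Real.sqrt A * (e / (3 * Real.sqrt C)))
      = (2 * Real.sqrt A) * e / Real.sqrt C := by
    field_simp; ring
  rw [h1, div_le_iff₀ hC]
  nlinarith [mul_le_mul_of_nonneg_right hge he]

end Aux

set_option maxHeartbeats 2000000 in
/-- Sample complexity for estimating the ATE with infinite observational data,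
sampling the experimental data uniformly,
i.e. `(x_1,x_2,x_3,x_4) = (1/4,1/4,1/4,1/4)` (Theorem 2, second bullet). -/
theorem ate_sample_complexity_sampling_uniformly
    {Ω : Type*} [MeasurableSpace Ω] (μ : Measure Ω) [IsProbabilityMeasure μ]
    (a q : Fin 4 → ℝ) (ha : ∀ j, 0 ≤ a j) (hasum : ∑ j, a j = 1)
    (hq0 : ∀ j, 0 ≤ q j) (hq1 : ∀ j, q j ≤ 1)
    (m : ℕ) (n : Fin 4 → ℕ) (hn : ∀ j, 0 < n j)
    -- uniform allocation: `n j = x j * m` with `x j = 1/4`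
    (halloc : ∀ j, (n j : ℝ) = (1 / 4 : ℝ) * m)
    (W : (j : Fin 4) → Fin (n j) → Ω → Bool)
    (hWmeas : ∀ j i, Measurable (W j i))
    (hindep : iIndepFun
      (fun k : Σ j : Fin 4, Fin (n j) => W k.1 k.2) μ)
    (hdist : ∀ j i, μ {ω | W j i ω = true} = ENNReal.ofReal (q j))
    (ε δ : ℝ) (hε0 : 0 < ε) (hε1 : ε ≤ 1) (hδ0 : 0 < δ) (hδ1 : δ < 1)
    (h37 : 0 < pOf a q 2 + pOf a q 6) (h48 : 0 < pOf a q 3 + pOf a q 7)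
    (h15 : 0 < pOf a q 0 + pOf a q 4) (h26 : 0 < pOf a q 1 + pOf a q 5)
    (hm : (m : ℝ) ≥ 18 * Real.log (8 / δ) / ε ^ 2 *
      max (4 * ((a 1) ^ 2 + (a 3) ^ 2) /
            min ((pOf a q 2 + pOf a q 6) ^ 2) ((pOf a q 3 + pOf a q 7) ^ 2))
          (4 * ((a 0) ^ 2 + (a 2) ^ 2) /
            min ((pOf a q 0 + pOf a q 4) ^ 2) ((pOf a q 1 + pOf a q 5) ^ 2))) :
    μ {ω | ε ≤
        |ATE (pOf a (fun j =>
            ((Finset.univ.filter fun i => W j i ω = true).card : ℝ) / n j)) -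
          ATE (pOf a q)|}
      < ENNReal.ofReal δ := by
  -- basic positivity facts
  have hb3 : 0 < a 1 * q 1 + a 3 * q 3 := h37
  have hb4 : 0 < a 1 * (1 - q 1) + a 3 * (1 - q 3) := h48
  have hb1 : 0 < a 0 * q 0 + a 2 * q 2 := h15
  have hb2 : 0 < a 0 * (1 - q 0) + a 2 * (1 - q 2) := h26
  obtain ⟨L, hLdef⟩ : ∃ L : ℝ, L = Real.log (8 / δ) := ⟨_, rfl⟩
  have hL0 : 0 < L := by
    rw [hLdef]
    apply Real.log_pos
    rw [lt_div_iff₀ hδ0]; linarith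
  have hA1 : 0 < (a 1) ^ 2 + (a 3) ^ 2 := by
    have u1 : a 1 * q 1 ≤ a 1 := mul_le_of_le_one_right (ha 1) (hq1 1)
    have u3 : a 3 * q 3 ≤ a 3 := mul_le_of_le_one_right (ha 3) (hq1 3)
    have h13 : 0 < a 1 + a 3 := by linarith
    nlinarith [sq_nonneg (a 1 - a 3), pow_pos h13 2]
  have hA2 : 0 < (a 0) ^ 2 + (a 2) ^ 2 := by
    have u0 : a 0 * q 0 ≤ a 0 := mul_le_of_le_one_right (ha 0) (hq1 0)
    have u2 : a 2 * q 2 ≤ a 2 := mul_le_of_le_one_right (ha 2) (hq1 2)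
    have h02 : 0 < a 0 + a 2 := by linarith
    nlinarith [sq_nonneg (a 0 - a 2), pow_pos h02 2]
  obtain ⟨C, hCdef⟩ : ∃ C : ℝ, C =
      max (4 * ((a 1) ^ 2 + (a 3) ^ 2) /
            min ((a 1 * q 1 + a 3 * q 3) ^ 2) ((a 1 * (1 - q 1) + a 3 * (1 - q 3)) ^ 2))
          (4 * ((a 0) ^ 2 + (a 2) ^ 2) /
            min ((a 0 * q 0 + a 2 * q 2) ^ 2) ((a 0 * (1 - q 0) + a 2 * (1 - q 2)) ^ 2)) :=
    ⟨_, rfl⟩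
  have hm' : (m : ℝ) ≥ 18 * L / ε ^ 2 * C := by rw [hCdef, hLdef]; exact hm
  have hC0 : 0 < C := by
    rw [hCdef]
    refine lt_of_lt_of_le ?_ (le_max_left _ _)
    exact div_pos (by linarith) (lt_min (pow_pos hb3 2) (pow_pos hb4 2))
  have hsC : 0 < Real.sqrt C := Real.sqrt_pos.mpr hC0
  obtain ⟨s, hsdef⟩ : ∃ s : ℝ, s = 11 / 10 * ε / (3 * Real.sqrt C) := ⟨_, rfl⟩
  have hs0 : 0 < s := by rw [hsdef]; positivity
  have hs2 : s ^ 2 = 121 * ε ^ 2 / (900 * C) := by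
    rw [hsdef, div_pow, mul_pow, mul_pow, Real.sq_sqrt hC0.le]
    field_simp
    ring
  -- sqrt bounds
  have hge1 : 2 * Real.sqrt ((a 1) ^ 2 + (a 3) ^ 2)
      ≤ Real.sqrt C * min (a 1 * q 1 + a 3 * q 3) (a 1 * (1 - q 1) + a 3 * (1 - q 3)) :=
    sqrtC_ge hA1.le hb3 hb4 (by rw [hCdef]; exact le_max_left _ _)
  have hge2 : 2 * Real.sqrt ((a 0) ^ 2 + (a 2) ^ 2)
      ≤ Real.sqrt C * min (a 0 * q 0 + a 2 * q 2) (a 0 * (1 - q 0) + a 2 * (1 - q 2)) :=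
    sqrtC_ge hA2.le hb1 hb2 (by rw [hCdef]; exact le_max_right _ _)
  have ha1sq : a 1 ≤ Real.sqrt ((a 1) ^ 2 + (a 3) ^ 2) := by
    have := Real.sqrt_le_sqrt (show (a 1) ^ 2 ≤ (a 1) ^ 2 + (a 3) ^ 2 by
      linarith [sq_nonneg (a 3)])
    rwa [Real.sqrt_sq (ha 1)] at this
  have ha3sq : a 3 ≤ Real.sqrt ((a 1) ^ 2 + (a 3) ^ 2) := by
    have := Real.sqrt_le_sqrt (show (a 3) ^ 2 ≤ (a 1) ^ 2 + (a 3) ^ 2 by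
      linarith [sq_nonneg (a 1)])
    rwa [Real.sqrt_sq (ha 3)] at this
  have ha0sq : a 0 ≤ Real.sqrt ((a 0) ^ 2 + (a 2) ^ 2) := by
    have := Real.sqrt_le_sqrt (show (a 0) ^ 2 ≤ (a 0) ^ 2 + (a 2) ^ 2 by
      linarith [sq_nonneg (a 2)])
    rwa [Real.sqrt_sq (ha 0)] at this
  have ha2sq : a 2 ≤ Real.sqrt ((a 0) ^ 2 + (a 2) ^ 2) := by
    have := Real.sqrt_le_sqrt (show (a 2) ^ 2 ≤ (a 0) ^ 2 + (a 2) ^ 2 by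
      linarith [sq_nonneg (a 0)])
    rwa [Real.sqrt_sq (ha 2)] at this
  -- the M bounds
  have hM13 : 6 * (Real.sqrt ((a 1) ^ 2 + (a 3) ^ 2) * s)
      ≤ (11 / 10 * ε) * (a 1 * q 1 + a 3 * q 3) := by
    have h6 := six_bound hsC (lt_min hb3 hb4) (by positivity : (0:ℝ) ≤ 11 / 10 * ε) hge1
    rw [← hsdef] at h6
    exact h6.trans (mul_le_mul_of_nonneg_left (min_le_left _ _) (by positivity))
  have hM14 : 6 * (Real.sqrt ((a 1) ^ 2 + (a 3) ^ 2) * s)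
      ≤ (11 / 10 * ε) * (a 1 * (1 - q 1) + a 3 * (1 - q 3)) := by
    have h6 := six_bound hsC (lt_min hb3 hb4) (by positivity : (0:ℝ) ≤ 11 / 10 * ε) hge1
    rw [← hsdef] at h6
    exact h6.trans (mul_le_mul_of_nonneg_left (min_le_right _ _) (by positivity))
  have hM21 : 6 * (Real.sqrt ((a 0) ^ 2 + (a 2) ^ 2) * s)
      ≤ (11 / 10 * ε) * (a 0 * q 0 + a 2 * q 2) := by
    have h6 := six_bound hsC (lt_min hb1 hb2) (by positivity : (0:ℝ) ≤ 11 / 10 * ε) hge2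
    rw [← hsdef] at h6
    exact h6.trans (mul_le_mul_of_nonneg_left (min_le_left _ _) (by positivity))
  have hM22 : 6 * (Real.sqrt ((a 0) ^ 2 + (a 2) ^ 2) * s)
      ≤ (11 / 10 * ε) * (a 0 * (1 - q 0) + a 2 * (1 - q 2)) := by
    have h6 := six_bound hsC (lt_min hb1 hb2) (by positivity : (0:ℝ) ≤ 11 / 10 * ε) hge2
    rw [← hsdef] at h6
    exact h6.trans (mul_le_mul_of_nonneg_left (min_le_right _ _) (by positivity))
  -- numeric bound per stratum
  have hnum : ∀ j : Fin 4, 2 * Real.exp (-2 * (n j : ℝ) * s ^ 2) < δ / 4 := by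
    intro j
    have hnj : (n j : ℝ) = 1 / 4 * m := halloc j
    have hms : 121 / 100 * L ≤ 2 * (n j : ℝ) * s ^ 2 := by
      have h1 : 18 * L / ε ^ 2 * C * s ^ 2 ≤ (m : ℝ) * s ^ 2 :=
        mul_le_mul_of_nonneg_right hm' (sq_nonneg s)
      have h2 : 18 * L / ε ^ 2 * C * s ^ 2 = 121 / 50 * L := by
        rw [hs2]
        field_simp
        ring
      rw [hnj]
      linarith [h1, h2]
    have hexp : Real.exp (-2 * (n j : ℝ) * s ^ 2) ≤ Real.exp (-(121 / 100 * L)) :=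
      Real.exp_le_exp.mpr (by linarith)
    have hstrict : Real.exp (-(121 / 100 * L)) < Real.exp (-L) :=
      Real.exp_lt_exp.mpr (by linarith)
    have hexpL : Real.exp (-L) = δ / 8 := by
      rw [hLdef, Real.exp_neg, Real.exp_log (by positivity), inv_div]
    have := hexp.trans_lt hstrict
    rw [hexpL] at this
    linarith
  -- per-stratum tail bounds
  have hEj : ∀ j : Fin 4,
      μ {ω | s ≤ |((Finset.univ.filter fun i => W j i ω = true).card : ℝ) / (n j) - q j|}
        < ENNReal.ofReal (δ / 4) := by
    intro j
    have hWind : iIndepFun (W j) μ :=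
      iIndepFun_precomp hindep (g := Sigma.mk j) sigma_mk_injective
    have htail := hoeffding_two_sided μ (hn j) (W j) (hWmeas j) hWind (q j)
      (hq0 j) (hq1 j) (hdist j) s hs0.le
    rw [ENNReal.lt_ofReal_iff_toReal_lt (measure_ne_top μ _)]
    exact lt_of_le_of_lt htail (hnum j)
  -- inclusion of the bad event in the union of per-stratum deviations
  have hsub : {ω | ε ≤
        |ATE (pOf a (fun j =>
            ((Finset.univ.filter fun i => W j i ω = true).card : ℝ) / n j)) -
          ATE (pOf a q)|}
      ⊆ ⋃ j : Fin 4,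
          {ω | s ≤ |((Finset.univ.filter fun i => W j i ω = true).card : ℝ) / (n j) - q j|} := by
    intro ω hω
    by_contra hc
    simp only [Set.mem_iUnion, Set.mem_setOf_eq, not_exists, not_le] at hc
    simp only [Set.mem_setOf_eq] at hω
    set q' : Fin 4 → ℝ := fun j =>
      ((Finset.univ.filter fun i => W j i ω = true).card : ℝ) / n j with hq'def
    have hq'0 : ∀ j, 0 ≤ q' j := fun j => by positivity
    have hq'1 : ∀ j, q' j ≤ 1 := by
      intro j
      have hcardle : ((Finset.univ.filter fun i => W j i ω = true).card : ℝ) ≤ (n j : ℝ) := by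
        exact_mod_cast (Finset.card_filter_le _ _).trans (by simp)
      have hnpos : (0:ℝ) < (n j : ℝ) := by exact_mod_cast hn j
      rw [show q' j = ((Finset.univ.filter fun i => W j i ω = true).card : ℝ) / n j from rfl,
        div_le_one hnpos]
      exact hcardle
    have hM1a : a 1 * |q' 1 - q 1| ≤ Real.sqrt ((a 1) ^ 2 + (a 3) ^ 2) * s :=
      mul_le_mul ha1sq (hc 1).le (abs_nonneg _) (Real.sqrt_nonneg _)
    have hM1b : a 3 * |q' 3 - q 3| ≤ Real.sqrt ((a 1) ^ 2 + (a 3) ^ 2) * s :=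
      mul_le_mul ha3sq (hc 3).le (abs_nonneg _) (Real.sqrt_nonneg _)
    have hM2a : a 0 * |q' 0 - q 0| ≤ Real.sqrt ((a 0) ^ 2 + (a 2) ^ 2) * s :=
      mul_le_mul ha0sq (hc 0).le (abs_nonneg _) (Real.sqrt_nonneg _)
    have hM2b : a 2 * |q' 2 - q 2| ≤ Real.sqrt ((a 0) ^ 2 + (a 2) ^ 2) * s :=
      mul_le_mul ha2sq (hc 2).le (abs_nonneg _) (Real.sqrt_nonneg _)
    have hdet := det_pOf a q q' (11 / 10 * ε)
      (Real.sqrt ((a 1) ^ 2 + (a 3) ^ 2) * s) (Real.sqrt ((a 0) ^ 2 + (a 2) ^ 2) * s)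
      ha hasum hq0 hq1 hq'0 hq'1 hb1 hb2 hb3 hb4 (by positivity) (by linarith)
      hM1a hM1b hM13 hM14 hM2a hM2b hM21 hM22
    have : |ATE (pOf a q') - ATE (pOf a q)| ≤ 8 / 9 * (11 / 10 * ε) := hdet
    have hlt : 8 / 9 * (11 / 10 * ε) < ε := by linarith
    exact absurd hω (by rw [hq'def] at this; linarith)
  -- union bound
  calc μ {ω | ε ≤
        |ATE (pOf a (fun j =>
            ((Finset.univ.filter fun i => W j i ω = true).card : ℝ) / n j)) -
          ATE (pOf a q)|}
      ≤ μ (⋃ j : Fin 4,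
          {ω | s ≤ |((Finset.univ.filter fun i => W j i ω = true).card : ℝ) / (n j) - q j|}) :=
        measure_mono hsub
    _ ≤ ∑' j : Fin 4,
          μ {ω | s ≤ |((Finset.univ.filter fun i => W j i ω = true).card : ℝ) / (n j) - q j|} :=
        measure_iUnion_le _
    _ = ∑ j : Fin 4,
          μ {ω | s ≤ |((Finset.univ.filter fun i => W j i ω = true).card : ℝ) / (n j) - q j|} :=
        tsum_fintype _
    _ < ENNReal.ofReal δ := by
        rw [Fin.sum_univ_four]
        have h4 : ENNReal.ofReal (δ / 4) + ENNReal.ofReal (δ / 4) + ENNReal.ofReal (δ / 4)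
            + ENNReal.ofReal (δ / 4) = ENNReal.ofReal δ := by
          rw [← ENNReal.ofReal_add (by positivity) (by positivity),
            ← ENNReal.ofReal_add (by positivity) (by positivity),
            ← ENNReal.ofReal_add (by positivity) (by positivity)]
          congr 1
          ring
        rw [← h4]
        exact ENNReal.add_lt_add (ENNReal.add_lt_add (ENNReal.add_lt_add (hEj 0) (hEj 1))
          (hEj 2)) (hEj 3)
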